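/- For pairwise distinct positive reals x₁, x₂, x₃, the Lehmer mean L(p) = (x₁^p + x₂^p + x₃^p)/(x₁^(p-1) + x₂^(p-1) + x₃^(p-1)) has exactly one inflection point: there exists a unique p* ∈ ℝ with L''(p*) = 0, and L''(p) > 0 for p < p* and L''(p) < 0 for p > p*. -/

import Mathlib

open Real

noncomputable def lehD (t₁ t₂ t₃ q : ℝ) : ℝ := exp (t₁*q) + exp (t₂*q) + exp (t₃*q)
noncomputable def lehD1 (t₁ t₂ t₃ q : ℝ) : ℝ := exp (t₁*q)*t₁ + exp (t₂*q)*t₂ + exp (t₃*q)*t₃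
noncomputable def lehD2 (t₁ t₂ t₃ q : ℝ) : ℝ := exp (t₁*q)*t₁*t₁ + exp (t₂*q)*t₂*t₂ + exp (t₃*q)*t₃*t₃
lemma hasDerivAt_expMul (c q : ℝ) : HasDerivAt (fun q : ℝ => exp (c*q)) (exp (c*q) * c) q := by
  have h : HasDerivAt (fun q : ℝ => c*q) (c*1) q := (hasDerivAt_id q).const_mul c
  simpa using h.exp

lemma lehD_pos (t₁ t₂ t₃ q : ℝ) : 0 < lehD t₁ t₂ t₃ q := by
  unfold lehD; positivity

lemma hasDerivAt_lehD (t₁ t₂ t₃ q : ℝ) :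
    HasDerivAt (fun q => lehD t₁ t₂ t₃ q) (lehD1 t₁ t₂ t₃ q) q := by
  unfold lehD lehD1
  exact ((hasDerivAt_expMul t₁ q).add (hasDerivAt_expMul t₂ q)).add (hasDerivAt_expMul t₃ q)

lemma hasDerivAt_lehD1 (t₁ t₂ t₃ q : ℝ) :
    HasDerivAt (fun q => lehD1 t₁ t₂ t₃ q) (lehD2 t₁ t₂ t₃ q) q := by
  unfold lehD1 lehD2
  exact (((hasDerivAt_expMul t₁ q).mul_const t₁).add ((hasDerivAt_expMul t₂ q).mul_const t₂)).add
    ((hasDerivAt_expMul t₃ q).mul_const t₃)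

lemma hasDerivAt_lehD_shift (t₁ t₂ t₃ p : ℝ) :
    HasDerivAt (fun p : ℝ => lehD t₁ t₂ t₃ (p-1)) (lehD1 t₁ t₂ t₃ (p-1)) p := by
  have h := (hasDerivAt_lehD t₁ t₂ t₃ (p-1)).comp p ((hasDerivAt_id p).sub_const 1)
  simpa [Function.comp_def] using h

lemma hasDerivAt_lehD1_shift (t₁ t₂ t₃ p : ℝ) :
    HasDerivAt (fun p : ℝ => lehD1 t₁ t₂ t₃ (p-1)) (lehD2 t₁ t₂ t₃ (p-1)) p := by
  have h := (hasDerivAt_lehD1 t₁ t₂ t₃ (p-1)).comp p ((hasDerivAt_id p).sub_const 1)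
  simpa [Function.comp_def] using h

noncomputable def lehW (t₁ t₂ t₃ p : ℝ) : ℝ :=
  (lehD2 t₁ t₂ t₃ p * lehD t₁ t₂ t₃ (p-1) - lehD t₁ t₂ t₃ p * lehD2 t₁ t₂ t₃ (p-1)) * lehD t₁ t₂ t₃ (p-1)
  - 2 * lehD1 t₁ t₂ t₃ (p-1) * (lehD1 t₁ t₂ t₃ p * lehD t₁ t₂ t₃ (p-1) - lehD t₁ t₂ t₃ p * lehD1 t₁ t₂ t₃ (p-1))

lemma lehm_iter (t₁ t₂ t₃ p : ℝ) :
    iteratedDeriv 2 (fun p => lehD t₁ t₂ t₃ p / lehD t₁ t₂ t₃ (p-1)) p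
      = lehW t₁ t₂ t₃ p / (lehD t₁ t₂ t₃ (p-1))^3 := by
  have hne : ∀ q, lehD t₁ t₂ t₃ q ≠ 0 := fun q => (lehD_pos t₁ t₂ t₃ q).ne'
  have hG1 : ∀ p : ℝ, HasDerivAt (fun p => lehD t₁ t₂ t₃ p / lehD t₁ t₂ t₃ (p-1))
      ((lehD1 t₁ t₂ t₃ p * lehD t₁ t₂ t₃ (p-1) - lehD t₁ t₂ t₃ p * lehD1 t₁ t₂ t₃ (p-1))
        / (lehD t₁ t₂ t₃ (p-1))^2) p := fun p =>
    (hasDerivAt_lehD t₁ t₂ t₃ p).div (hasDerivAt_lehD_shift t₁ t₂ t₃ p) (hne (p-1))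
  have hd1 : deriv (fun p => lehD t₁ t₂ t₃ p / lehD t₁ t₂ t₃ (p-1))
      = fun p => (lehD1 t₁ t₂ t₃ p * lehD t₁ t₂ t₃ (p-1) - lehD t₁ t₂ t₃ p * lehD1 t₁ t₂ t₃ (p-1))
        / (lehD t₁ t₂ t₃ (p-1))^2 := funext fun p => (hG1 p).deriv
  have hnum : HasDerivAt (fun p => lehD1 t₁ t₂ t₃ p * lehD t₁ t₂ t₃ (p-1) - lehD t₁ t₂ t₃ p * lehD1 t₁ t₂ t₃ (p-1))
      (lehD2 t₁ t₂ t₃ p * lehD t₁ t₂ t₃ (p-1) + lehD1 t₁ t₂ t₃ p * lehD1 t₁ t₂ t₃ (p-1)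
        - (lehD1 t₁ t₂ t₃ p * lehD1 t₁ t₂ t₃ (p-1) + lehD t₁ t₂ t₃ p * lehD2 t₁ t₂ t₃ (p-1))) p :=
    ((hasDerivAt_lehD1 t₁ t₂ t₃ p).mul (hasDerivAt_lehD_shift t₁ t₂ t₃ p)).sub
      ((hasDerivAt_lehD t₁ t₂ t₃ p).mul (hasDerivAt_lehD1_shift t₁ t₂ t₃ p))
  have hden : HasDerivAt (fun p : ℝ => (lehD t₁ t₂ t₃ (p-1))^2)
      (2 * lehD t₁ t₂ t₃ (p-1) ^ 1 * lehD1 t₁ t₂ t₃ (p-1)) p := by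
    have := (hasDerivAt_lehD_shift t₁ t₂ t₃ p).fun_pow' 2
    refine this.congr_deriv ?_
    simp [Finset.sum_range_succ]
    ring
  have hG2 := hnum.fun_div hden (by simpa using pow_ne_zero 2 (hne (p-1)))
  rw [show (2:ℕ) = 1+1 from rfl, iteratedDeriv_succ, iteratedDeriv_one, hd1]
  rw [hG2.deriv]
  have h3 := hne (p-1)
  unfold lehW
  field_simp
  ring
noncomputable def lehZ (x₁ x₂ x₃ t₁ t₂ t₃ q : ℝ) : ℝ :=
  ((x₂-x₁)*(t₂-t₁)*(t₁+t₂-2*t₃) + (x₃-x₁)*(t₃-t₁)*(t₁+t₃-2*t₂) + (x₃-x₂)*(t₃-t₂)*(t₂+t₃-2*t₁)) +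
  ((x₂-x₁)*(t₂-t₁)^2 * (exp ((t₁-t₃)*q) - exp ((t₂-t₃)*q)) +
   (x₃-x₁)*(t₃-t₁)^2 * (exp ((t₁-t₂)*q) - exp ((t₃-t₂)*q)) +
   (x₃-x₂)*(t₃-t₂)^2 * (exp ((t₂-t₁)*q) - exp ((t₃-t₁)*q)))

noncomputable def lehZ' (x₁ x₂ x₃ t₁ t₂ t₃ q : ℝ) : ℝ :=
  (x₂-x₁)*(t₂-t₁)^2 * (exp ((t₁-t₃)*q)*(t₁-t₃) - exp ((t₂-t₃)*q)*(t₂-t₃)) +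
  (x₃-x₁)*(t₃-t₁)^2 * (exp ((t₁-t₂)*q)*(t₁-t₂) - exp ((t₃-t₂)*q)*(t₃-t₂)) +
  (x₃-x₂)*(t₃-t₂)^2 * (exp ((t₂-t₁)*q)*(t₂-t₁) - exp ((t₃-t₁)*q)*(t₃-t₁))

lemma hasDerivAt_lehZ (x₁ x₂ x₃ t₁ t₂ t₃ q : ℝ) :
    HasDerivAt (fun q => lehZ x₁ x₂ x₃ t₁ t₂ t₃ q) (lehZ' x₁ x₂ x₃ t₁ t₂ t₃ q) q := by
  unfold lehZ lehZ'
  apply HasDerivAt.const_add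
  exact ((((hasDerivAt_expMul (t₁-t₃) q).sub (hasDerivAt_expMul (t₂-t₃) q)).const_mul _).add
    (((hasDerivAt_expMul (t₁-t₂) q).sub (hasDerivAt_expMul (t₃-t₂) q)).const_mul _)).add
    (((hasDerivAt_expMul (t₂-t₁) q).sub (hasDerivAt_expMul (t₃-t₁) q)).const_mul _)

lemma lehZ'_neg (x₁ x₂ x₃ t₁ t₂ t₃ q : ℝ)
    (h12 : x₁ < x₂) (h23 : x₂ < x₃) (ht12 : t₁ < t₂) (ht23 : t₂ < t₃) :
    lehZ' x₁ x₂ x₃ t₁ t₂ t₃ q < 0 := by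
  unfold lehZ'
  set E13 := exp ((t₁-t₃)*q) with hE13
  set E23 := exp ((t₂-t₃)*q) with hE23
  set E12 := exp ((t₁-t₂)*q) with hE12
  set E32 := exp ((t₃-t₂)*q) with hE32
  set E21 := exp ((t₂-t₁)*q) with hE21
  set E31 := exp ((t₃-t₁)*q) with hE31
  have pE13 : 0 < E13 := exp_pos _
  have pE23 : 0 < E23 := exp_pos _
  have pE12 : 0 < E12 := exp_pos _
  have pE32 : 0 < E32 := exp_pos _
  have pE21 : 0 < E21 := exp_pos _
  have pE31 : 0 < E31 := exp_pos _
  have hb12 : (0:ℝ) < (x₂-x₁)*(t₂-t₁)^2 :=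
    mul_pos (sub_pos.mpr h12) (pow_pos (sub_pos.mpr ht12) 2)
  have hb13 : (0:ℝ) < (x₃-x₁)*(t₃-t₁)^2 :=
    mul_pos (sub_pos.mpr (h12.trans h23)) (pow_pos (sub_pos.mpr (ht12.trans ht23)) 2)
  have hb23 : (0:ℝ) < (x₃-x₂)*(t₃-t₂)^2 :=
    mul_pos (sub_pos.mpr h23) (pow_pos (sub_pos.mpr ht23) 2)
  have hb1213 : (x₂-x₁)*(t₂-t₁)^2 ≤ (x₃-x₁)*(t₃-t₁)^2 := by
    apply mul_le_mul (by linarith) (by nlinarith) (by positivity) (by linarith)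
  have hb2313 : (x₃-x₂)*(t₃-t₂)^2 ≤ (x₃-x₁)*(t₃-t₁)^2 := by
    apply mul_le_mul (by linarith) (by nlinarith) (by positivity) (by linarith)
  rcases le_or_gt q 0 with hq | hq
  · -- q ≤ 0
    have hc1 : E23 ≤ E13 := by
      rw [hE23, hE13]
      exact exp_le_exp.mpr (mul_le_mul_of_nonpos_right (by linarith) hq)
    have hc2 : E21 ≤ E12 := by
      rw [hE21, hE12]
      exact exp_le_exp.mpr (mul_le_mul_of_nonpos_right (by linarith) hq)
    have key1 : (x₂-x₁)*(t₂-t₁)^2*(E23*(t₃-t₂)) ≤ (x₂-x₁)*(t₂-t₁)^2*(E13*(t₃-t₁)) := by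
      apply mul_le_mul_of_nonneg_left _ hb12.le
      apply mul_le_mul hc1 (by linarith) (by linarith) pE13.le
    have key2 : (x₃-x₂)*(t₃-t₂)^2*(E21*(t₂-t₁)) ≤ (x₃-x₁)*(t₃-t₁)^2*(E12*(t₂-t₁)) := by
      apply mul_le_mul hb2313 _ (mul_nonneg pE21.le (by linarith)) hb13.le
      exact mul_le_mul_of_nonneg_right hc2 (by linarith)
    have pos1 : 0 < (x₃-x₁)*(t₃-t₁)^2*(E32*(t₃-t₂)) :=
      mul_pos hb13 (mul_pos pE32 (sub_pos.mpr ht23))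
    have pos2 : 0 < (x₃-x₂)*(t₃-t₂)^2*(E31*(t₃-t₁)) :=
      mul_pos hb23 (mul_pos pE31 (sub_pos.mpr (ht12.trans ht23)))
    have expand : (x₂-x₁)*(t₂-t₁)^2 * (E13*(t₁-t₃) - E23*(t₂-t₃)) +
        (x₃-x₁)*(t₃-t₁)^2 * (E12*(t₁-t₂) - E32*(t₃-t₂)) +
        (x₃-x₂)*(t₃-t₂)^2 * (E21*(t₂-t₁) - E31*(t₃-t₁))
        = ((x₂-x₁)*(t₂-t₁)^2*(E23*(t₃-t₂)) - (x₂-x₁)*(t₂-t₁)^2*(E13*(t₃-t₁)))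
          + ((x₃-x₂)*(t₃-t₂)^2*(E21*(t₂-t₁)) - (x₃-x₁)*(t₃-t₁)^2*(E12*(t₂-t₁)))
          - (x₃-x₁)*(t₃-t₁)^2*(E32*(t₃-t₂)) - (x₃-x₂)*(t₃-t₂)^2*(E31*(t₃-t₁)) := by ring
    rw [expand]
    linarith [key1, key2, pos1, pos2]
  · -- q > 0
    have hc1 : E23 ≤ E32 := by
      rw [hE23, hE32]
      exact exp_le_exp.mpr (mul_le_mul_of_nonneg_right (by linarith) hq.le)
    have hc2 : E21 ≤ E31 := by
      rw [hE21, hE31]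
      exact exp_le_exp.mpr (mul_le_mul_of_nonneg_right (by linarith) hq.le)
    have key1 : (x₂-x₁)*(t₂-t₁)^2*(E23*(t₃-t₂)) ≤ (x₃-x₁)*(t₃-t₁)^2*(E32*(t₃-t₂)) := by
      apply mul_le_mul hb1213 _ (mul_nonneg pE23.le (by linarith)) hb13.le
      exact mul_le_mul_of_nonneg_right hc1 (by linarith)
    have key2 : (x₃-x₂)*(t₃-t₂)^2*(E21*(t₂-t₁)) ≤ (x₃-x₂)*(t₃-t₂)^2*(E31*(t₃-t₁)) := by
      apply mul_le_mul_of_nonneg_left _ hb23.le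
      apply mul_le_mul hc2 (by linarith) (by linarith) pE31.le
    have pos1 : 0 < (x₂-x₁)*(t₂-t₁)^2*(E13*(t₃-t₁)) :=
      mul_pos hb12 (mul_pos pE13 (sub_pos.mpr (ht12.trans ht23)))
    have pos2 : 0 < (x₃-x₁)*(t₃-t₁)^2*(E12*(t₂-t₁)) :=
      mul_pos hb13 (mul_pos pE12 (sub_pos.mpr ht12))
    have expand : (x₂-x₁)*(t₂-t₁)^2 * (E13*(t₁-t₃) - E23*(t₂-t₃)) +
        (x₃-x₁)*(t₃-t₁)^2 * (E12*(t₁-t₂) - E32*(t₃-t₂)) +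
        (x₃-x₂)*(t₃-t₂)^2 * (E21*(t₂-t₁) - E31*(t₃-t₁))
        = ((x₂-x₁)*(t₂-t₁)^2*(E23*(t₃-t₂)) - (x₃-x₁)*(t₃-t₁)^2*(E32*(t₃-t₂)))
          + ((x₃-x₂)*(t₃-t₂)^2*(E21*(t₂-t₁)) - (x₃-x₂)*(t₃-t₂)^2*(E31*(t₃-t₁)))
          - (x₂-x₁)*(t₂-t₁)^2*(E13*(t₃-t₁)) - (x₃-x₁)*(t₃-t₁)^2*(E12*(t₂-t₁)) := by ring
    rw [expand]
    linarith [key1, key2, pos1, pos2]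
lemma lehW_eq (x₁ x₂ x₃ t₁ t₂ t₃ p : ℝ)
    (h1 : exp t₁ = x₁) (h2 : exp t₂ = x₂) (h3 : exp t₃ = x₃) :
    lehW t₁ t₂ t₃ p
      = exp (t₁*(p-1)) * exp (t₂*(p-1)) * exp (t₃*(p-1)) * lehZ x₁ x₂ x₃ t₁ t₂ t₃ (p-1) := by
  have e1 : exp (t₁*p) = exp (t₁*(p-1)) * x₁ := by
    rw [← h1, ← exp_add]; congr 1; ring
  have e2 : exp (t₂*p) = exp (t₂*(p-1)) * x₂ := by
    rw [← h2, ← exp_add]; congr 1; ring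
  have e3 : exp (t₃*p) = exp (t₃*(p-1)) * x₃ := by
    rw [← h3, ← exp_add]; congr 1; ring
  have d13 : exp ((t₁-t₃)*(p-1)) = exp (t₁*(p-1)) / exp (t₃*(p-1)) := by
    rw [← exp_sub]; congr 1; ring
  have d23 : exp ((t₂-t₃)*(p-1)) = exp (t₂*(p-1)) / exp (t₃*(p-1)) := by
    rw [← exp_sub]; congr 1; ring
  have d12 : exp ((t₁-t₂)*(p-1)) = exp (t₁*(p-1)) / exp (t₂*(p-1)) := by
    rw [← exp_sub]; congr 1; ring
  have d32 : exp ((t₃-t₂)*(p-1)) = exp (t₃*(p-1)) / exp (t₂*(p-1)) := by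
    rw [← exp_sub]; congr 1; ring
  have d21 : exp ((t₂-t₁)*(p-1)) = exp (t₂*(p-1)) / exp (t₁*(p-1)) := by
    rw [← exp_sub]; congr 1; ring
  have d31 : exp ((t₃-t₁)*(p-1)) = exp (t₃*(p-1)) / exp (t₁*(p-1)) := by
    rw [← exp_sub]; congr 1; ring
  unfold lehW lehD lehD1 lehD2 lehZ
  rw [e1, e2, e3, d13, d23, d12, d32, d21, d31]
  have n1 : exp (t₁*(p-1)) ≠ 0 := exp_ne_zero _
  have n2 : exp (t₂*(p-1)) ≠ 0 := exp_ne_zero _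
  have n3 : exp (t₃*(p-1)) ≠ 0 := exp_ne_zero _
  field_simp
  ring
lemma exp_le_one_of_nonpos {a : ℝ} (h : a ≤ 0) : exp a ≤ 1 := by
  rw [← Real.exp_zero]; exact exp_le_exp.mpr h

lemma lehZ_exists_pos (x₁ x₂ x₃ t₁ t₂ t₃ : ℝ)
    (h12 : x₁ < x₂) (h23 : x₂ < x₃) (ht12 : t₁ < t₂) (ht23 : t₂ < t₃) :
    ∃ q ≤ 0, 0 < lehZ x₁ x₂ x₃ t₁ t₂ t₃ q := by
  set C := (x₂-x₁)*(t₂-t₁)*(t₁+t₂-2*t₃) + (x₃-x₁)*(t₃-t₁)*(t₁+t₃-2*t₂) +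
    (x₃-x₂)*(t₃-t₂)*(t₂+t₃-2*t₁) with hC
  have hb13 : (0:ℝ) < (x₃-x₁)*(t₃-t₁)^2 :=
    mul_pos (sub_pos.mpr (h12.trans h23)) (pow_pos (sub_pos.mpr (ht12.trans ht23)) 2)
  have hd : (0:ℝ) < (x₃-x₁)*(t₃-t₁)^2*(t₂-t₁) := mul_pos hb13 (sub_pos.mpr ht12)
  set q₀ : ℝ := -(1 + |C| / ((x₃-x₁)*(t₃-t₁)^2*(t₂-t₁))) with hq₀
  have hq0 : q₀ ≤ 0 := by
    rw [hq₀]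
    have : 0 ≤ |C| / ((x₃-x₁)*(t₃-t₁)^2*(t₂-t₁)) := div_nonneg (abs_nonneg C) hd.le
    linarith
  refine ⟨q₀, hq0, ?_⟩
  have hb12 : (0:ℝ) < (x₂-x₁)*(t₂-t₁)^2 :=
    mul_pos (sub_pos.mpr h12) (pow_pos (sub_pos.mpr ht12) 2)
  have hb23 : (0:ℝ) < (x₃-x₂)*(t₃-t₂)^2 :=
    mul_pos (sub_pos.mpr h23) (pow_pos (sub_pos.mpr ht23) 2)
  have hA : exp ((t₂-t₃)*q₀) ≤ exp ((t₁-t₃)*q₀) :=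
    exp_le_exp.mpr (mul_le_mul_of_nonpos_right (by linarith) hq0)
  have hB : exp ((t₃-t₁)*q₀) ≤ exp ((t₂-t₁)*q₀) :=
    exp_le_exp.mpr (mul_le_mul_of_nonpos_right (by linarith) hq0)
  have hCC : exp ((t₃-t₂)*q₀) ≤ 1 :=
    exp_le_one_of_nonpos (mul_nonpos_of_nonneg_of_nonpos (by linarith) hq0)
  have hD : 1 + (t₁-t₂)*q₀ ≤ exp ((t₁-t₂)*q₀) := by
    have := Real.add_one_le_exp ((t₁-t₂)*q₀); linarith
  have e1 : 0 ≤ (x₂-x₁)*(t₂-t₁)^2 * (exp ((t₁-t₃)*q₀) - exp ((t₂-t₃)*q₀)) :=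
    mul_nonneg hb12.le (by linarith)
  have e3 : 0 ≤ (x₃-x₂)*(t₃-t₂)^2 * (exp ((t₂-t₁)*q₀) - exp ((t₃-t₁)*q₀)) :=
    mul_nonneg hb23.le (by linarith)
  have harith : (x₃-x₁)*(t₃-t₁)^2*((t₁-t₂)*q₀) = (x₃-x₁)*(t₃-t₁)^2*(t₂-t₁) + |C| := by
    have hk : (x₃-x₁)*(t₃-t₁)^2*(t₂-t₁) * (|C| / ((x₃-x₁)*(t₃-t₁)^2*(t₂-t₁))) = |C| := by
      rw [← mul_div_assoc]; exact mul_div_cancel_left₀ _ hd.ne'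
    rw [hq₀]
    linear_combination hk
  have e2 : (x₃-x₁)*(t₃-t₁)^2*(t₂-t₁) + |C|
      ≤ (x₃-x₁)*(t₃-t₁)^2 * (exp ((t₁-t₂)*q₀) - exp ((t₃-t₂)*q₀)) := by
    have h' : (t₁-t₂)*q₀ ≤ exp ((t₁-t₂)*q₀) - exp ((t₃-t₂)*q₀) := by linarith
    have := mul_le_mul_of_nonneg_left h' hb13.le
    linarith [harith]
  have habs : -C ≤ |C| := by cases abs_cases C <;> linarith
  unfold lehZ
  rw [← hC]
  linarith [e1, e2, e3, habs, hd]

lemma lehZ_exists_neg (x₁ x₂ x₃ t₁ t₂ t₃ : ℝ)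
    (h12 : x₁ < x₂) (h23 : x₂ < x₃) (ht12 : t₁ < t₂) (ht23 : t₂ < t₃) :
    ∃ q, 0 ≤ q ∧ lehZ x₁ x₂ x₃ t₁ t₂ t₃ q < 0 := by
  set C := (x₂-x₁)*(t₂-t₁)*(t₁+t₂-2*t₃) + (x₃-x₁)*(t₃-t₁)*(t₁+t₃-2*t₂) +
    (x₃-x₂)*(t₃-t₂)*(t₂+t₃-2*t₁) with hC
  have hb13 : (0:ℝ) < (x₃-x₁)*(t₃-t₁)^2 :=
    mul_pos (sub_pos.mpr (h12.trans h23)) (pow_pos (sub_pos.mpr (ht12.trans ht23)) 2)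
  have hd : (0:ℝ) < (x₃-x₁)*(t₃-t₁)^2*(t₃-t₂) := mul_pos hb13 (sub_pos.mpr ht23)
  set q₁ : ℝ := 1 + |C| / ((x₃-x₁)*(t₃-t₁)^2*(t₃-t₂)) with hq₁
  have hq1 : 0 ≤ q₁ := by
    rw [hq₁]
    have : 0 ≤ |C| / ((x₃-x₁)*(t₃-t₁)^2*(t₃-t₂)) := div_nonneg (abs_nonneg C) hd.le
    linarith
  refine ⟨q₁, hq1, ?_⟩
  have hb12 : (0:ℝ) < (x₂-x₁)*(t₂-t₁)^2 :=
    mul_pos (sub_pos.mpr h12) (pow_pos (sub_pos.mpr ht12) 2)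
  have hb23 : (0:ℝ) < (x₃-x₂)*(t₃-t₂)^2 :=
    mul_pos (sub_pos.mpr h23) (pow_pos (sub_pos.mpr ht23) 2)
  have hA : exp ((t₁-t₃)*q₁) ≤ exp ((t₂-t₃)*q₁) :=
    exp_le_exp.mpr (mul_le_mul_of_nonneg_right (by linarith) hq1)
  have hB : exp ((t₂-t₁)*q₁) ≤ exp ((t₃-t₁)*q₁) :=
    exp_le_exp.mpr (mul_le_mul_of_nonneg_right (by linarith) hq1)
  have hCC : exp ((t₁-t₂)*q₁) ≤ 1 :=
    exp_le_one_of_nonpos (mul_nonpos_of_nonpos_of_nonneg (by linarith) hq1)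
  have hD : 1 + (t₃-t₂)*q₁ ≤ exp ((t₃-t₂)*q₁) := by
    have := Real.add_one_le_exp ((t₃-t₂)*q₁); linarith
  have e1 : (x₂-x₁)*(t₂-t₁)^2 * (exp ((t₁-t₃)*q₁) - exp ((t₂-t₃)*q₁)) ≤ 0 :=
    mul_nonpos_of_nonneg_of_nonpos hb12.le (by linarith)
  have e3 : (x₃-x₂)*(t₃-t₂)^2 * (exp ((t₂-t₁)*q₁) - exp ((t₃-t₁)*q₁)) ≤ 0 :=
    mul_nonpos_of_nonneg_of_nonpos hb23.le (by linarith)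
  have harith : (x₃-x₁)*(t₃-t₁)^2*((t₃-t₂)*q₁) = (x₃-x₁)*(t₃-t₁)^2*(t₃-t₂) + |C| := by
    have hk : (x₃-x₁)*(t₃-t₁)^2*(t₃-t₂) * (|C| / ((x₃-x₁)*(t₃-t₁)^2*(t₃-t₂))) = |C| := by
      rw [← mul_div_assoc]; exact mul_div_cancel_left₀ _ hd.ne'
    rw [hq₁]
    linear_combination hk
  have e2 : (x₃-x₁)*(t₃-t₁)^2 * (exp ((t₁-t₂)*q₁) - exp ((t₃-t₂)*q₁))
      ≤ -((x₃-x₁)*(t₃-t₁)^2*(t₃-t₂) + |C|) := by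
    have h' : exp ((t₁-t₂)*q₁) - exp ((t₃-t₂)*q₁) ≤ -((t₃-t₂)*q₁) := by linarith
    have := mul_le_mul_of_nonneg_left h' hb13.le
    have hneg : (x₃-x₁)*(t₃-t₁)^2 * (-((t₃-t₂)*q₁)) = -((x₃-x₁)*(t₃-t₁)^2*((t₃-t₂)*q₁)) := by ring
    rw [hneg] at this
    linarith [harith]
  have habs : C ≤ |C| := le_abs_self C
  unfold lehZ
  rw [← hC]
  linarith [e1, e2, e3, habs, hd]

theorem lehmer_key (x₁ x₂ x₃ : ℝ) (hx₁ : 0 < x₁) (h12 : x₁ < x₂) (h23 : x₂ < x₃) :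
    ∃ p' : ℝ,
      (∀ p : ℝ, iteratedDeriv 2
          (fun q : ℝ => (x₁ ^ q + x₂ ^ q + x₃ ^ q) /
            (x₁ ^ (q - 1) + x₂ ^ (q - 1) + x₃ ^ (q - 1))) p = 0 ↔ p = p') ∧
      (∀ p : ℝ, p < p' → 0 < iteratedDeriv 2
          (fun q : ℝ => (x₁ ^ q + x₂ ^ q + x₃ ^ q) /
            (x₁ ^ (q - 1) + x₂ ^ (q - 1) + x₃ ^ (q - 1))) p) ∧
      (∀ p : ℝ, p' < p → iteratedDeriv 2
          (fun q : ℝ => (x₁ ^ q + x₂ ^ q + x₃ ^ q) /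
            (x₁ ^ (q - 1) + x₂ ^ (q - 1) + x₃ ^ (q - 1))) p < 0) := by
  have hx₂ : 0 < x₂ := hx₁.trans h12
  have hx₃ : 0 < x₃ := hx₂.trans h23
  have ht12 : Real.log x₁ < Real.log x₂ := Real.log_lt_log hx₁ h12
  have ht23 : Real.log x₂ < Real.log x₃ := Real.log_lt_log hx₂ h23
  have he₁ : exp (Real.log x₁) = x₁ := Real.exp_log hx₁
  have he₂ : exp (Real.log x₂) = x₂ := Real.exp_log hx₂
  have he₃ : exp (Real.log x₃) = x₃ := Real.exp_log hx₃
  set t₁ := Real.log x₁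
  set t₂ := Real.log x₂
  set t₃ := Real.log x₃
  -- the function in exponential form
  have hFeq : (fun q : ℝ => (x₁ ^ q + x₂ ^ q + x₃ ^ q) /
      (x₁ ^ (q - 1) + x₂ ^ (q - 1) + x₃ ^ (q - 1)))
      = fun p => lehD t₁ t₂ t₃ p / lehD t₁ t₂ t₃ (p-1) := by
    funext q
    simp only [lehD, Real.rpow_def_of_pos hx₁, Real.rpow_def_of_pos hx₂,
      Real.rpow_def_of_pos hx₃]
    rfl
  -- strict antitonicity of Z
  have hZanti : StrictAnti (lehZ x₁ x₂ x₃ t₁ t₂ t₃) := by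
    apply strictAnti_of_deriv_neg
    intro q
    rw [(hasDerivAt_lehZ x₁ x₂ x₃ t₁ t₂ t₃ q).deriv]
    exact lehZ'_neg x₁ x₂ x₃ t₁ t₂ t₃ q h12 h23 ht12 ht23
  have hZdiff : Differentiable ℝ (lehZ x₁ x₂ x₃ t₁ t₂ t₃) :=
    fun q => (hasDerivAt_lehZ x₁ x₂ x₃ t₁ t₂ t₃ q).differentiableAt
  have hZcont : Continuous (lehZ x₁ x₂ x₃ t₁ t₂ t₃) := hZdiff.continuous
  obtain ⟨qp, hqp0, hqppos⟩ := lehZ_exists_pos x₁ x₂ x₃ t₁ t₂ t₃ h12 h23 ht12 ht23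
  obtain ⟨qn, hqn0, hqnneg⟩ := lehZ_exists_neg x₁ x₂ x₃ t₁ t₂ t₃ h12 h23 ht12 ht23
  have hpn : qp < qn := by
    rcases lt_or_ge qp qn with h | h
    · exact h
    · exfalso
      have := hZanti.antitone h
      linarith
  obtain ⟨qs, hqsmem, hqs0⟩ := intermediate_value_Icc' hpn.le hZcont.continuousOn
    (Set.mem_Icc.mpr ⟨hqnneg.le, hqppos.le⟩)
  -- master sign formula
  have hmain : ∀ p : ℝ, iteratedDeriv 2
      (fun q : ℝ => (x₁ ^ q + x₂ ^ q + x₃ ^ q) /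
        (x₁ ^ (q - 1) + x₂ ^ (q - 1) + x₃ ^ (q - 1))) p
      = (exp (t₁*(p-1)) * exp (t₂*(p-1)) * exp (t₃*(p-1)) / (lehD t₁ t₂ t₃ (p-1))^3)
        * lehZ x₁ x₂ x₃ t₁ t₂ t₃ (p-1) := by
    intro p
    rw [hFeq, lehm_iter, lehW_eq x₁ x₂ x₃ t₁ t₂ t₃ p he₁ he₂ he₃]
    ring
  have hposfac : ∀ p : ℝ, 0 < exp (t₁*(p-1)) * exp (t₂*(p-1)) * exp (t₃*(p-1))
      / (lehD t₁ t₂ t₃ (p-1))^3 := by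
    intro p
    apply div_pos (by positivity) (pow_pos (lehD_pos t₁ t₂ t₃ (p-1)) 3)
  refine ⟨qs + 1, ?_, ?_, ?_⟩
  · intro p
    rw [hmain p]
    constructor
    · intro h
      rcases mul_eq_zero.mp h with h' | h'
      · exact absurd h' (hposfac p).ne'
      · have : p - 1 = qs := hZanti.injective (h'.trans hqs0.symm)
        linarith
    · intro h
      subst h
      have : qs + 1 - 1 = qs := by ring
      rw [this, hqs0, mul_zero]
  · intro p hp
    rw [hmain p]
    apply mul_pos (hposfac p)
    have : lehZ x₁ x₂ x₃ t₁ t₂ t₃ qs < lehZ x₁ x₂ x₃ t₁ t₂ t₃ (p-1) :=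
      hZanti (by linarith)
    linarith [hqs0]
  · intro p hp
    rw [hmain p]
    apply mul_neg_of_pos_of_neg (hposfac p)
    have : lehZ x₁ x₂ x₃ t₁ t₂ t₃ (p-1) < lehZ x₁ x₂ x₃ t₁ t₂ t₃ qs :=
      hZanti (by linarith)
    linarith [hqs0]

theorem lehmer_three_unique_inflection (x₁ x₂ x₃ : ℝ)
    (hx₁ : 0 < x₁) (hx₂ : 0 < x₂) (hx₃ : 0 < x₃)
    (h12 : x₁ ≠ x₂) (h13 : x₁ ≠ x₃) (h23 : x₂ ≠ x₃) :
    ∃ p' : ℝ,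
      (∀ p : ℝ, iteratedDeriv 2
          (fun q : ℝ => (x₁ ^ q + x₂ ^ q + x₃ ^ q) /
            (x₁ ^ (q - 1) + x₂ ^ (q - 1) + x₃ ^ (q - 1))) p = 0 ↔ p = p') ∧
      (∀ p : ℝ, p < p' → 0 < iteratedDeriv 2
          (fun q : ℝ => (x₁ ^ q + x₂ ^ q + x₃ ^ q) /
            (x₁ ^ (q - 1) + x₂ ^ (q - 1) + x₃ ^ (q - 1))) p) ∧
      (∀ p : ℝ, p' < p → iteratedDeriv 2
          (fun q : ℝ => (x₁ ^ q + x₂ ^ q + x₃ ^ q) /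
            (x₁ ^ (q - 1) + x₂ ^ (q - 1) + x₃ ^ (q - 1))) p < 0) := by
  rcases h12.lt_or_gt with a | a <;> rcases h13.lt_or_gt with b | b <;>
    rcases h23.lt_or_gt with c | c
  · exact lehmer_key x₁ x₂ x₃ hx₁ a c
  · have e : (fun q : ℝ => (x₁ ^ q + x₃ ^ q + x₂ ^ q) /
        (x₁ ^ (q - 1) + x₃ ^ (q - 1) + x₂ ^ (q - 1)))
        = (fun q : ℝ => (x₁ ^ q + x₂ ^ q + x₃ ^ q) /
        (x₁ ^ (q - 1) + x₂ ^ (q - 1) + x₃ ^ (q - 1))) := by funext q; ring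
    exact e ▸ lehmer_key x₁ x₃ x₂ hx₁ b c
  · exfalso; linarith
  · have e : (fun q : ℝ => (x₃ ^ q + x₁ ^ q + x₂ ^ q) /
        (x₃ ^ (q - 1) + x₁ ^ (q - 1) + x₂ ^ (q - 1)))
        = (fun q : ℝ => (x₁ ^ q + x₂ ^ q + x₃ ^ q) /
        (x₁ ^ (q - 1) + x₂ ^ (q - 1) + x₃ ^ (q - 1))) := by funext q; ring
    exact e ▸ lehmer_key x₃ x₁ x₂ hx₃ b a
  · have e : (fun q : ℝ => (x₂ ^ q + x₁ ^ q + x₃ ^ q) /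
        (x₂ ^ (q - 1) + x₁ ^ (q - 1) + x₃ ^ (q - 1)))
        = (fun q : ℝ => (x₁ ^ q + x₂ ^ q + x₃ ^ q) /
        (x₁ ^ (q - 1) + x₂ ^ (q - 1) + x₃ ^ (q - 1))) := by funext q; ring
    exact e ▸ lehmer_key x₂ x₁ x₃ hx₂ a b
  · exfalso; linarith
  · have e : (fun q : ℝ => (x₂ ^ q + x₃ ^ q + x₁ ^ q) /
        (x₂ ^ (q - 1) + x₃ ^ (q - 1) + x₁ ^ (q - 1)))
        = (fun q : ℝ => (x₁ ^ q + x₂ ^ q + x₃ ^ q) /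
        (x₁ ^ (q - 1) + x₂ ^ (q - 1) + x₃ ^ (q - 1))) := by funext q; ring
    exact e ▸ lehmer_key x₂ x₃ x₁ hx₂ c b
  · have e : (fun q : ℝ => (x₃ ^ q + x₂ ^ q + x₁ ^ q) /
        (x₃ ^ (q - 1) + x₂ ^ (q - 1) + x₁ ^ (q - 1)))
        = (fun q : ℝ => (x₁ ^ q + x₂ ^ q + x₃ ^ q) /
        (x₁ ^ (q - 1) + x₂ ^ (q - 1) + x₃ ^ (q - 1))) := by funext q; ring
    exact e ▸ lehmer_key x₃ x₂ x₁ hx₃ c a
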